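/- Define ι : (−∞,0) → ℂ by ι(x) = e^{2iκεx} · (1−x)^{s−iτ+iε+1} · (−x)^{1−s−iτ−iε}, where the powers are of positive real bases (i.e. t^c = exp(c·log t) with the real logarithm of t > 0). If P₁, P₂ : (−∞,0) → ℂ are twice differentiable and both satisfy Equation (P) on (−∞,0), then the function x ↦ ι(x) · (P₁(x)P₂′(x) − P₁′(x)P₂(x)) is constant on (−∞,0). -/

import Mathlib

open Set Complex

/-- The function `ι(x) ⋅ (P₁ P₂′ − P₁′ P₂)` built from two solutions of Equation (P) is
constant on `(−∞, 0)`, where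
`ι(x) = e^{2iκεx} (1−x)^{s−iτ+iε+1} (−x)^{1−s−iτ−iε}` (positive real bases). -/
theorem wronskian_constant_eqP
    (a : ℝ) (ha : |a| < 1) (s m : ℤ) (ω lam : ℂ) (hω : ω ≠ 0)
    (κ : ℝ) (hκ : κ = Real.sqrt (1 - a ^ 2))
    (ε τ : ℂ) (hε : ε = 2 * ω) (hτ : τ = (ε - (m : ℂ) * (a : ℂ)) / (κ : ℂ))
    (ι : ℝ → ℂ)
    (hι : ∀ x : ℝ, x < 0 →
      ι x = Complex.exp (2 * I * (κ : ℂ) * ε * (x : ℂ))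
        * Complex.exp (((s : ℂ) - I * τ + I * ε + 1) * (Real.log (1 - x) : ℂ))
        * Complex.exp ((1 - (s : ℂ) - I * τ - I * ε) * (Real.log (-x) : ℂ)))
    (q₁ q₂ : ℝ → ℂ)
    (hq₁ : ∀ x : ℝ, q₁ x = (1 - (s : ℂ) - I * ε - I * τ)
      - 2 * (1 - I * ε * (κ : ℂ) - I * τ) * (x : ℂ) - 2 * I * ε * (κ : ℂ) * (x : ℂ) ^ 2)
    (hq₂ : ∀ x : ℝ, q₂ x = lam - ε ^ 2 + I * ε * (κ : ℂ) * (1 - 2 * (s : ℂ))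
      + (s : ℂ) * ((s : ℂ) + 1) + τ * (I + τ) + 2 * ε * (κ : ℂ) * (-I + I * (s : ℂ) + ε - τ) * (x : ℂ))
    (P₁ P₂ : ℝ → ℂ)
    (hP₁ : ∀ x ∈ Iio (0 : ℝ), DifferentiableAt ℝ P₁ x)
    (hP₁' : ∀ x ∈ Iio (0 : ℝ), DifferentiableAt ℝ (deriv P₁) x)
    (hP₂ : ∀ x ∈ Iio (0 : ℝ), DifferentiableAt ℝ P₂ x)
    (hP₂' : ∀ x ∈ Iio (0 : ℝ), DifferentiableAt ℝ (deriv P₂) x)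
    (heq₁ : ∀ x ∈ Iio (0 : ℝ),
      (x : ℂ) * (1 - (x : ℂ)) * deriv (deriv P₁) x + q₁ x * deriv P₁ x + q₂ x * P₁ x = 0)
    (heq₂ : ∀ x ∈ Iio (0 : ℝ),
      (x : ℂ) * (1 - (x : ℂ)) * deriv (deriv P₂) x + q₁ x * deriv P₂ x + q₂ x * P₂ x = 0) :
    ∀ x ∈ Iio (0 : ℝ), ∀ y ∈ Iio (0 : ℝ),
      ι x * (P₁ x * deriv P₂ x - deriv P₁ x * P₂ x)
        = ι y * (P₁ y * deriv P₂ y - deriv P₁ y * P₂ y) := by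
  intro x hx y hy
  set c₁ : ℂ := 2 * I * (κ : ℂ) * ε with hc₁
  set c₂ : ℂ := (s : ℂ) - I * τ + I * ε + 1 with hc₂
  set c₃ : ℂ := 1 - (s : ℂ) - I * τ - I * ε with hc₃
  set G : ℝ → ℂ := fun t =>
    Complex.exp (c₁ * (t : ℂ)) * Complex.exp (c₂ * (Real.log (1 - t) : ℂ))
      * Complex.exp (c₃ * (Real.log (-t) : ℂ))
      * (P₁ t * deriv P₂ t - deriv P₁ t * P₂ t) with hG
  have key : ∀ z ∈ Iio (0 : ℝ), HasDerivAt G 0 z := by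
    intro z hz
    have hz0 : z < 0 := hz
    have hz1 : (0 : ℝ) < 1 - z := by linarith
    have hzC : (z : ℂ) ≠ 0 := by exact_mod_cast ne_of_lt hz0
    have h1zC : (1 : ℂ) - (z : ℂ) ≠ 0 := by
      have : ((1 - z : ℝ) : ℂ) ≠ 0 := by exact_mod_cast ne_of_gt hz1
      simpa using this
    -- derivative of exp(c₁ t)
    have hA : HasDerivAt (fun t : ℝ => Complex.exp (c₁ * (t : ℂ)))
        (Complex.exp (c₁ * (z : ℂ)) * c₁) z := by
      have : HasDerivAt (fun t : ℝ => c₁ * (t : ℂ)) c₁ z := by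
        simpa using ((hasDerivAt_id z).ofReal_comp.const_mul c₁)
      simpa using this.cexp
    -- derivative of exp(c₂ log(1-t))
    have hlog1 : HasDerivAt (fun t : ℝ => Real.log (1 - t)) (-(1 - z)⁻¹) z := by
      have hin : HasDerivAt (fun t : ℝ => 1 - t) (-1) z := by
        simpa using ((hasDerivAt_id z).const_sub 1)
      have := (Real.hasDerivAt_log (ne_of_gt hz1)).comp z hin
      rw [show (-(1 - z)⁻¹ : ℝ) = (1 - z)⁻¹ * -1 by ring]
      exact this
    have hB : HasDerivAt (fun t : ℝ => Complex.exp (c₂ * (Real.log (1 - t) : ℂ)))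
        (Complex.exp (c₂ * (Real.log (1 - z) : ℂ)) * (c₂ * (-(1 - (z : ℂ))⁻¹))) z := by
      have h := (hlog1.ofReal_comp.const_mul c₂).cexp
      convert h using 2
      push_cast
      ring
    -- derivative of exp(c₃ log(-t))
    have hlog2 : HasDerivAt (fun t : ℝ => Real.log (-t)) z⁻¹ z := by
      have hfun : (fun t : ℝ => Real.log (-t)) = fun t : ℝ => Real.log t := by
        funext t; exact Real.log_neg_eq_log t
      rw [hfun]
      exact Real.hasDerivAt_log (ne_of_lt hz0)
    have hC : HasDerivAt (fun t : ℝ => Complex.exp (c₃ * (Real.log (-t) : ℂ)))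
        (Complex.exp (c₃ * (Real.log (-z) : ℂ)) * (c₃ * (z : ℂ)⁻¹)) z := by
      have h := (hlog2.ofReal_comp.const_mul c₃).cexp
      convert h using 2
      push_cast
      ring
    -- derivative of the Wronskian
    have hW : HasDerivAt (fun t : ℝ => P₁ t * deriv P₂ t - deriv P₁ t * P₂ t)
        (deriv P₁ z * deriv P₂ z + P₁ z * deriv (deriv P₂) z
          - (deriv (deriv P₁) z * P₂ z + deriv P₁ z * deriv P₂ z)) z :=
      (((hP₁ z hz).hasDerivAt.mul (hP₂' z hz).hasDerivAt)).sub
        (((hP₁' z hz).hasDerivAt.mul (hP₂ z hz).hasDerivAt))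
    have hG' := ((hA.mul hB).mul hC).mul hW
    -- the algebraic identity making the derivative vanish
    have hpoly : (z : ℂ) * (1 - (z : ℂ))
        * (c₁ + c₂ * (-(1 - (z : ℂ))⁻¹) + c₃ * (z : ℂ)⁻¹) = q₁ z := by
      rw [hq₁]
      field_simp
      ring
    have e₁ := heq₁ z hz
    have e₂ := heq₂ z hz
    have hzero : (c₁ + c₂ * (-(1 - (z : ℂ))⁻¹) + c₃ * (z : ℂ)⁻¹)
          * (P₁ z * deriv P₂ z - deriv P₁ z * P₂ z)
        + (P₁ z * deriv (deriv P₂) z - deriv (deriv P₁) z * P₂ z) = 0 := by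
      have hne : (z : ℂ) * (1 - (z : ℂ)) ≠ 0 := mul_ne_zero hzC h1zC
      refine mul_left_cancel₀ hne ?_
      rw [mul_zero]
      linear_combination hpoly * (P₁ z * deriv P₂ z - deriv P₁ z * P₂ z)
        + P₁ z * e₂ - P₂ z * e₁
    simp only [Pi.mul_apply] at hG'
    refine hG'.congr_deriv ?_
    linear_combination ((Complex.exp (c₁ * (z : ℂ))
        * Complex.exp (c₂ * (Real.log (1 - z) : ℂ))
        * Complex.exp (c₃ * (Real.log (-z) : ℂ)))) * hzero
  have hconst : G x = G y := by
    refine (convex_Iio (0 : ℝ)).is_const_of_fderivWithin_eq_zero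
      (fun z hz => ((key z hz).differentiableAt).differentiableWithinAt) ?_ hx hy
    intro z hz
    rw [fderivWithin_of_isOpen isOpen_Iio hz, (key z hz).hasFDerivAt.fderiv]
    ext
    simp
  have hgx : ι x * (P₁ x * deriv P₂ x - deriv P₁ x * P₂ x) = G x := by
    rw [hι x hx]
  have hgy : ι y * (P₁ y * deriv P₂ y - deriv P₁ y * P₂ y) = G y := by
    rw [hι y hy]
  rw [hgx, hgy, hconst]
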